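/- arXiv:1504.01419 — 3 statements merged into one kernel-verified Lean document; each statement's English description precedes it below -/
import Mathlib

section
/- For the filtration F_j = sigma(epsilon_k : k <= j coordinatewise, k in Z^d) generated by an i.i.d. family {epsilon_k}_{k in Z^d}, the commuting property holds: for any integrable random variable Y measurable with respect to sigma(epsilon_k : k in Z^d) and any j, k in Z^d, E[E(Y | F_j) | F_k] = E[E(Y | F_k) | F_j] = E(Y | F_{j wedge k}), where (j wedge k)_q = min(j_q, k_q) for q = 1,...,d. -/
open MeasureTheory ProbabilityTheory Filter
open scoped ENNReal Topology

/-- Auxiliary: if `X` is `mA`-measurable and integrable, `mC ≤ mA`, and `mD` is independent of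
`mA`, then conditioning on `mC ⊔ mD` is the same as conditioning on `mC`. -/
lemma condexp_sup_of_indep {Ω : Type*} [mΩ : MeasurableSpace Ω] {μ : Measure Ω}
    [IsProbabilityMeasure μ] {mA mC mD : MeasurableSpace Ω}
    (hCA : mC ≤ mA) (hA : mA ≤ mΩ) (hD : mD ≤ mΩ)
    (hindep : Indep mA mD μ) {X : Ω → ℝ} (hXint : Integrable X μ)
    (hXm : StronglyMeasurable[mA] X) :
    μ[X | mC ⊔ mD] =ᵐ[μ] μ[X | mC] := by
  letI : MeasurableSpace Ω := mΩ
  have hC : mC ≤ mΩ := hCA.trans hA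
  have hsup : mC ⊔ mD ≤ mΩ := sup_le hC hD
  -- product formula for integrals over `c ∩ d`
  have hprod : ∀ (f : Ω → ℝ), StronglyMeasurable[mA] f → Integrable f μ →
      ∀ c d : Set Ω, MeasurableSet[mC] c → MeasurableSet[mD] d →
      ∫ x in c ∩ d, f x ∂μ = (∫ x in c, f x ∂μ) * (μ d).toReal := by
    intro f hfm hfint c d hc hd
    have hcA : MeasurableSet[mA] c := hCA _ hc
    have hcΩ : MeasurableSet[mΩ] c := hA _ hcA
    have hdΩ : MeasurableSet[mΩ] d := hD _ hd
    have hind : IndepFun (c.indicator f) (d.indicator fun _ => (1 : ℝ)) μ := by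
      rw [IndepFun_iff_Indep]
      rw [Indep_iff] at hindep ⊢
      intro t1 t2 ht1 ht2
      exact hindep t1 t2
        (measurable_iff_comap_le.mp ((hfm.measurable).indicator hcA) _ ht1)
        (measurable_iff_comap_le.mp (measurable_const.indicator hd) _ ht2)
    have heq : (c ∩ d).indicator f
        = (c.indicator f) * (d.indicator fun _ => (1 : ℝ)) := by
      funext x
      by_cases h1 : x ∈ c <;> by_cases h2 : x ∈ d <;>
        simp [Set.indicator_apply, h1, h2]
    calc ∫ x in c ∩ d, f x ∂μ
        = ∫ x, (c ∩ d).indicator f x ∂μ := (integral_indicator (hcΩ.inter hdΩ)).symm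
      _ = ∫ x, ((c.indicator f) * (d.indicator fun _ => (1 : ℝ))) x ∂μ := by rw [heq]
      _ = (∫ x, c.indicator f x ∂μ) * ∫ x, d.indicator (fun _ => (1 : ℝ)) x ∂μ :=
          hind.integral_mul_eq_mul_integral (hfint.indicator hcΩ).aestronglyMeasurable
            ((integrable_const (1 : ℝ)).indicator hdΩ).aestronglyMeasurable
      _ = (∫ x in c, f x ∂μ) * (μ d).toReal := by
          rw [integral_indicator hcΩ, integral_indicator hdΩ]
          simp [Measure.real]
  -- π-system generating `mC ⊔ mD`
  set P : Set (Set Ω) := {t | ∃ c d : Set Ω, MeasurableSet[mC] c ∧ MeasurableSet[mD] d ∧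
      t = c ∩ d} with hP
  have hgen : (mC ⊔ mD) = MeasurableSpace.generateFrom P := by
    refine le_antisymm (sup_le ?_ ?_) (MeasurableSpace.generateFrom_le ?_)
    · exact fun t ht => MeasurableSpace.measurableSet_generateFrom
        ⟨t, Set.univ, ht, MeasurableSet.univ, (Set.inter_univ t).symm⟩
    · exact fun t ht => MeasurableSpace.measurableSet_generateFrom
        ⟨Set.univ, t, MeasurableSet.univ, ht, (Set.univ_inter t).symm⟩
    · rintro t ⟨c, d, hc, hd, rfl⟩
      exact ((le_sup_left : mC ≤ mC ⊔ mD) _ hc).inter ((le_sup_right : mD ≤ mC ⊔ mD) _ hd)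
  have hPi : IsPiSystem P := by
    rintro t ⟨c, d, hc, hd, rfl⟩ t' ⟨c', d', hc', hd', rfl⟩ -
    exact ⟨c ∩ c', d ∩ d', hc.inter hc', hd.inter hd', by rw [Set.inter_inter_inter_comm]⟩
  have main : ∀ ⦃t : Set Ω⦄, MeasurableSet[mC ⊔ mD] t →
      ∫ x in t, (μ[X | mC]) x ∂μ = ∫ x in t, X x ∂μ := by
    refine MeasurableSpace.induction_on_inter (m := mC ⊔ mD) hgen hPi ?_ ?_ ?_ ?_
    · simp
    · rintro t ⟨c, d, hc, hd, rfl⟩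
      rw [hprod X hXm hXint c d hc hd,
        hprod (μ[X | mC]) (stronglyMeasurable_condExp.mono hCA) integrable_condExp c d hc hd,
        setIntegral_condExp hC hXint hc]
    · intro t htm ht
      have htΩ : MeasurableSet[mΩ] t := hsup _ htm
      have h1 := integral_add_compl htΩ (integrable_condExp (m := mC) (f := X) (μ := μ))
      have h2 := integral_add_compl htΩ hXint
      have h3 : ∫ x, (μ[X | mC]) x ∂μ = ∫ x, X x ∂μ := integral_condExp hC
      linarith
    · intro f hdisj hfm hCf
      rw [integral_iUnion (fun i => hsup _ (hfm i)) hdisj integrable_condExp.integrableOn,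
        integral_iUnion (fun i => hsup _ (hfm i)) hdisj hXint.integrableOn]
      exact tsum_congr hCf
  exact (ae_eq_condExp_of_forall_setIntegral_eq hsup hXint
    (fun s _ _ => integrable_condExp.integrableOn) (fun s hs _ => main hs)
    ((stronglyMeasurable_condExp.mono (le_sup_left : mC ≤ mC ⊔ mD)).aestronglyMeasurable)).symm

/-- The σ-algebra `F_j` generated by the variables `ε k` with `k ≤ j` coordinatewise. -/
def sigmaLe {Ω : Type*} [MeasurableSpace Ω] {d : ℕ} (ε : (Fin d → ℤ) → Ω → ℝ)
    (j : Fin d → ℤ) : MeasurableSpace Ω :=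
  ⨆ k ∈ {k : Fin d → ℤ | ∀ q, k q ≤ j q}, MeasurableSpace.comap (ε k) inferInstance

/-- One-sided version of the commuting property. -/
lemma stmt1_aux {Ω : Type*} [mΩ : MeasurableSpace Ω] {d : ℕ} (μ : Measure Ω)
    [IsProbabilityMeasure μ] (ε : (Fin d → ℤ) → Ω → ℝ)
    (hmeas : ∀ j, Measurable (ε j))
    (hindep : iIndepFun ε μ)
    (Y : Ω → ℝ) (hYint : Integrable Y μ) (j k : Fin d → ℤ) :
    μ[μ[Y | sigmaLe ε j] | sigmaLe ε k] =ᵐ[μ] μ[Y | sigmaLe ε (fun q => min (j q) (k q))] := by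
  set A : Set (Fin d → ℤ) := {m | ∀ q, m q ≤ j q} with hA
  set B : Set (Fin d → ℤ) := {m | ∀ q, m q ≤ k q} with hB
  have hSet : {m : Fin d → ℤ | ∀ q, m q ≤ (fun q => min (j q) (k q)) q} = B ∩ A := by
    ext m
    simp only [Set.mem_setOf_eq, Set.mem_inter_iff, hA, hB, le_min_iff]
    constructor
    · exact fun h => ⟨fun q => (h q).2, fun q => (h q).1⟩
    · exact fun h q => ⟨h.2 q, h.1 q⟩
  have hcomap_le : ∀ i : Fin d → ℤ,
      MeasurableSpace.comap (ε i) inferInstance ≤ mΩ := fun i => (hmeas i).comap_le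
  have hA_le : sigmaLe ε j ≤ mΩ := iSup₂_le fun i _ => hcomap_le i
  have hI_le_A : sigmaLe ε (fun q => min (j q) (k q)) ≤ sigmaLe ε j := by
    refine iSup₂_le fun m hm => ?_
    exact le_iSup₂ (f := fun (i : Fin d → ℤ) (_ : i ∈ A) =>
      MeasurableSpace.comap (ε i) inferInstance) m (fun q => (hm q).trans (min_le_left _ _))
  have hD_le : (⨆ m ∈ B \ A, MeasurableSpace.comap (ε m) inferInstance) ≤ mΩ :=
    iSup₂_le fun i _ => hcomap_le i
  have hB_eq : sigmaLe ε k
      = sigmaLe ε (fun q => min (j q) (k q)) ⊔ ⨆ m ∈ B \ A,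
        MeasurableSpace.comap (ε m) inferInstance := by
    have hI_eq : sigmaLe ε (fun q => min (j q) (k q))
        = ⨆ m ∈ B ∩ A, MeasurableSpace.comap (ε m) inferInstance := by
      show (⨆ m ∈ {m : Fin d → ℤ | ∀ q, m q ≤ (fun q => min (j q) (k q)) q},
        MeasurableSpace.comap (ε m) inferInstance) = _
      rw [hSet]
    rw [hI_eq]
    show (⨆ m ∈ B, MeasurableSpace.comap (ε m) inferInstance) = _
    rw [← iSup_union, Set.inter_union_diff]
  have hindepAD : Indep (sigmaLe ε j)
      (⨆ m ∈ B \ A, MeasurableSpace.comap (ε m) inferInstance) μ := by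
    have h := indep_iSup_of_disjoint (m := fun i : Fin d → ℤ =>
        MeasurableSpace.comap (ε i) inferInstance) hcomap_le hindep.iIndep
        (Set.disjoint_sdiff_right (s := A) (t := B))
    exact h
  rw [hB_eq]
  exact (condexp_sup_of_indep hI_le_A hA_le hD_le hindepAD integrable_condExp
    stronglyMeasurable_condExp).trans (condExp_condExp_of_le hI_le_A hA_le)

/-- the filtration generated by an i.i.d. family `{ε_k}_{k ∈ ℤ^d}` is commuting:
`E[E(Y|F_j)|F_k] = E[E(Y|F_k)|F_j] = E(Y|F_{j ∧ k})` for integrable `Y` measurable with respect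
to `σ(ε_k : k ∈ ℤ^d)`. -/
theorem stmt1 {Ω : Type*} [MeasurableSpace Ω] {d : ℕ} (μ : Measure Ω) [IsProbabilityMeasure μ]
    (ε : (Fin d → ℤ) → Ω → ℝ)
    (hmeas : ∀ j, Measurable (ε j))
    (hindep : iIndepFun ε μ)
    (hident : ∀ j k, IdentDistrib (ε j) (ε k) μ μ)
    (Y : Ω → ℝ) (hYint : Integrable Y μ)
    (hYmeas : Measurable[⨆ k, MeasurableSpace.comap (ε k) inferInstance] Y)
    (j k : Fin d → ℤ) :
    (μ[μ[Y | sigmaLe ε j] | sigmaLe ε k] =ᵐ[μ] μ[Y | sigmaLe ε (fun q => min (j q) (k q))]) ∧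
    (μ[μ[Y | sigmaLe ε k] | sigmaLe ε j] =ᵐ[μ] μ[Y | sigmaLe ε (fun q => min (j q) (k q))]) := by
  have hswap : sigmaLe ε (fun q => min (k q) (j q)) = sigmaLe ε (fun q => min (j q) (k q)) := by
    congr 1
    funext q
    exact min_comm _ _
  refine ⟨stmt1_aux μ ε hmeas hindep Y hYint j k, ?_⟩
  have := stmt1_aux μ ε hmeas hindep Y hYint k j
  rwa [hswap] at this
end

section
/- Let {b_{n,j}}_{j in Z^d} be square-summable real coefficients with b_n = (sum_j b_{n,j}^2)^{1/2} > 0, such that for each canonical unit vector e_q, ||T_{e_q} b_n - b_n||_{l^2} / b_n -> 0 as n -> infinity. Then for every fixed j in Z^d, (1/b_n^2) * sum_{k in Z^d} b_{n,k} b_{n,k+j} -> 1 as n -> infinity. -/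
open Filter
open scoped Topology

set_option maxHeartbeats 1600000 in
/-- if the ℓ² coefficients `b_n` satisfy the unit-vector shift condition
`‖T_{e_q} b_n − b_n‖_{ℓ²}/b_n → 0`, then for every fixed `j`,
`(1/b_n²) ∑_k b_{n,k} b_{n,k+j} → 1`. -/
theorem stmt7 {d : ℕ} (b : ℕ → (Fin d → ℤ) → ℝ)
    (hb : ∀ n, Summable fun j => (b n j) ^ 2)
    (hbpos : ∀ n, 0 < ∑' j, (b n j) ^ 2)
    (bn : ℕ → ℝ) (hbn : ∀ n, bn n = Real.sqrt (∑' j, (b n j) ^ 2))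
    (hshift : ∀ q : Fin d,
      Tendsto (fun n =>
          Real.sqrt (∑' j, (b n (j + Pi.single q 1) - b n j) ^ 2) / bn n)
        atTop (𝓝 0)) :
    ∀ j : Fin d → ℤ,
      Tendsto (fun n => (∑' k, b n k * b n (k + j)) / (bn n) ^ 2) atTop (𝓝 1) := by
  have hbn2 : ∀ n, (bn n) ^ 2 = ∑' j, (b n j) ^ 2 := fun n => by
    rw [hbn]; exact Real.sq_sqrt (tsum_nonneg fun j => sq_nonneg _)
  have hbn2pos : ∀ n, 0 < (bn n) ^ 2 := fun n => (hbn2 n) ▸ hbpos n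
  have hshiftSummable : ∀ n (j : Fin d → ℤ), Summable (fun k => (b n (k + j)) ^ 2) :=
    fun n j => ((Equiv.addRight j).summable_iff).mpr (hb n)
  have hshiftTsum : ∀ n (j : Fin d → ℤ), (∑' k, (b n (k + j)) ^ 2) = ∑' k, (b n k) ^ 2 :=
    fun n j => (Equiv.addRight j).tsum_eq (fun k => (b n k) ^ 2)
  have hprodSummable : ∀ n (j : Fin d → ℤ), Summable (fun k => b n k * b n (k + j)) := by
    intro n j
    apply Summable.of_abs
    refine Summable.of_nonneg_of_le (fun k => abs_nonneg _) (fun k => ?_)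
      (((hb n).add (hshiftSummable n j)).div_const 2)
    rw [abs_mul]
    nlinarith [sq_nonneg (|b n k| - |b n (k + j)|), sq_abs (b n k), sq_abs (b n (k + j))]
  have hdiffSummable : ∀ n (j : Fin d → ℤ),
      Summable (fun k => (b n (k + j) - b n k) ^ 2) := by
    intro n j
    have : Summable (fun k => ((b n (k + j)) ^ 2 + (b n k) ^ 2)
        - 2 * (b n k * b n (k + j))) :=
      ((hshiftSummable n j).add (hb n)).sub ((hprodSummable n j).mul_left 2)
    exact this.congr (fun k => by ring)
  have hdiffTsum : ∀ n (j : Fin d → ℤ),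
      (∑' k, (b n (k + j) - b n k) ^ 2)
        = 2 * (∑' k, (b n k) ^ 2) - 2 * ∑' k, b n k * b n (k + j) := by
    intro n j
    have h1 : (∑' k, (b n (k + j) - b n k) ^ 2)
        = ∑' k, (((b n (k + j)) ^ 2 + (b n k) ^ 2) - 2 * (b n k * b n (k + j))) :=
      tsum_congr fun k => by ring
    rw [h1, Summable.tsum_sub ((hshiftSummable n j).add (hb n)) ((hprodSummable n j).mul_left 2),
      Summable.tsum_add (hshiftSummable n j) (hb n), tsum_mul_left, hshiftTsum n j]
    ring
  set E : (Fin d → ℤ) → ℕ → ℝ :=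
    fun j n => (∑' k, (b n (k + j) - b n k) ^ 2) / (bn n) ^ 2 with hE
  have hEnonneg : ∀ (j : Fin d → ℤ) n, 0 ≤ E j n :=
    fun j n => div_nonneg (tsum_nonneg fun k => sq_nonneg _) (sq_nonneg _)
  have hEneg : ∀ (j : Fin d → ℤ) n, E (-j) n = E j n := by
    intro j n
    have : (∑' k, (b n (k + -j) - b n k) ^ 2) = ∑' k, (b n (k + j) - b n k) ^ 2 := by
      rw [← (Equiv.addRight j).tsum_eq (fun k => (b n (k + -j) - b n k) ^ 2)]
      apply tsum_congr
      intro k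
      simp only [Equiv.coe_addRight, add_neg_cancel_right]
      ring
    simp only [hE, this]
  have hEadd : ∀ (j₁ j₂ : Fin d → ℤ) n, E (j₁ + j₂) n ≤ 2 * E j₁ n + 2 * E j₂ n := by
    intro j₁ j₂ n
    have htrans : (∑' k, (b n (k + j₂ + j₁) - b n (k + j₂)) ^ 2)
        = ∑' k, (b n (k + j₁) - b n k) ^ 2 :=
      (Equiv.addRight j₂).tsum_eq (fun k => (b n (k + j₁) - b n k) ^ 2)
    have hsum : Summable (fun k => (b n (k + j₂ + j₁) - b n (k + j₂)) ^ 2) :=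
      ((Equiv.addRight j₂).summable_iff).mpr (hdiffSummable n j₁)
    have hle : (∑' k, (b n (k + (j₁ + j₂)) - b n k) ^ 2)
        ≤ 2 * (∑' k, (b n (k + j₁) - b n k) ^ 2) + 2 * ∑' k, (b n (k + j₂) - b n k) ^ 2 := by
      rw [← htrans, ← tsum_mul_left, ← tsum_mul_left,
        ← Summable.tsum_add (hsum.mul_left 2) ((hdiffSummable n j₂).mul_left 2)]
      apply Summable.tsum_le_tsum _ (hdiffSummable n (j₁ + j₂))
        ((hsum.mul_left 2).add ((hdiffSummable n j₂).mul_left 2))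
      intro k
      have : k + (j₁ + j₂) = k + j₂ + j₁ := by ring
      rw [this]
      nlinarith [sq_nonneg ((b n (k + j₂ + j₁) - b n (k + j₂)) - (b n (k + j₂) - b n k))]
    simp only [hE]
    rw [div_le_iff₀ (hbn2pos n)]
    calc (∑' k, (b n (k + (j₁ + j₂)) - b n k) ^ 2)
        ≤ 2 * (∑' k, (b n (k + j₁) - b n k) ^ 2) + 2 * ∑' k, (b n (k + j₂) - b n k) ^ 2 := hle
      _ = (2 * ((∑' k, (b n (k + j₁) - b n k) ^ 2) / (bn n) ^ 2)
            + 2 * ((∑' k, (b n (k + j₂) - b n k) ^ 2) / (bn n) ^ 2)) * (bn n) ^ 2 := by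
          have h := (hbn2pos n).ne'
          have h' : bn n ≠ 0 := fun h0 => h (by rw [h0]; ring)
          field_simp
  have hE0 : ∀ n, E 0 n = 0 := by
    intro n
    simp [hE]
  have hEunit : ∀ q : Fin d, Tendsto (E (Pi.single q 1)) atTop (𝓝 0) := by
    intro q
    have h := (hshift q).mul (hshift q)
    rw [mul_zero] at h
    apply h.congr
    intro n
    rw [div_mul_div_comm, Real.mul_self_sqrt (tsum_nonneg fun k => sq_nonneg _)]
    simp only [hE, sq]
  have hEtend : ∀ j : Fin d → ℤ, Tendsto (E j) atTop (𝓝 0) := by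
    have hadd : ∀ j₁ j₂ : Fin d → ℤ, Tendsto (E j₁) atTop (𝓝 0) →
        Tendsto (E j₂) atTop (𝓝 0) → Tendsto (E (j₁ + j₂)) atTop (𝓝 0) := by
      intro j₁ j₂ h1 h2
      have h3 := (h1.const_mul 2).add (h2.const_mul 2)
      rw [mul_zero, add_zero] at h3
      exact squeeze_zero (fun n => hEnonneg _ n) (fun n => hEadd j₁ j₂ n) h3
    let S : AddSubgroup (Fin d → ℤ) :=
      { carrier := {j | Tendsto (E j) atTop (𝓝 0)}
        zero_mem' := by
          have : E 0 = fun _ => 0 := funext hE0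
          simpa [this] using (tendsto_const_nhds : Tendsto (fun _ : ℕ => (0:ℝ)) atTop (𝓝 0))
        add_mem' := fun h1 h2 => hadd _ _ h1 h2
        neg_mem' := by
          intro j h
          have : E (-j) = E j := funext (hEneg j)
          simpa [Set.mem_setOf_eq, this] using h }
    intro j
    have hj : j = ∑ q : Fin d, (j q) • Pi.single q (1 : ℤ) := by
      conv_lhs => rw [← Finset.univ_sum_single j]
      refine Finset.sum_congr rfl fun q _ => ?_
      rw [← Pi.single_smul, smul_eq_mul, mul_one]
    have : j ∈ S := by
      rw [hj]
      exact sum_mem fun q _ => zsmul_mem (hEunit q) _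
    exact this
  intro j
  have key : ∀ n, (∑' k, b n k * b n (k + j)) / (bn n) ^ 2 = 1 - E j n / 2 := by
    intro n
    have hA : (∑' k, (b n k) ^ 2) ≠ 0 := (hbpos n).ne'
    simp only [hE, hdiffTsum n j, hbn2]
    field_simp
    ring
  have h2 : Tendsto (fun n => E j n / 2) atTop (𝓝 0) := by
    simpa using (hEtend j).div_const 2
  have h : Tendsto (fun n => 1 - E j n / 2) atTop (𝓝 1) := by
    simpa using (tendsto_const_nhds : Tendsto (fun _ : ℕ => (1:ℝ)) atTop (𝓝 1)).sub h2
  exact h.congr fun n => (key n).symm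
end

section
/- Let {epsilon_i}_{i in Z} be i.i.d. centered square-integrable random variables and X_i = epsilon_i - epsilon_{i-1}. Then there exists an increasing sequence of finite sets Gamma_n subset Z with |Gamma_n| -> infinity such that, writing S_{Gamma_n} = sum_{i in Gamma_n} X_i, sigma_n^2 = Var(S_{Gamma_n}), b_n^2 = |Gamma_n|, one has liminf_n sigma_n^2 / b_n^2 > 0 but sigma_n^2 / b_n^2 does not converge. -/
open MeasureTheory ProbabilityTheory Filter
open scoped Topology

noncomputable def stmt14c (Γ : Finset ℤ) (j : ℤ) : ℝ :=
  (if j ∈ Γ then 1 else 0) - (if j + 1 ∈ Γ then 1 else 0)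

noncomputable def stmt14T (Γ : Finset ℤ) : Finset ℤ := Γ ∪ Γ.image (· - 1)

lemma stmt14_mem_img (Γ : Finset ℤ) (j : ℤ) : j ∈ Γ.image (· - 1) ↔ j + 1 ∈ Γ := by
  simp only [Finset.mem_image]
  constructor
  · rintro ⟨i, hi, rfl⟩; simpa using hi
  · intro h; exact ⟨j + 1, h, by ring⟩

lemma stmt14_inter_left (Γ : Finset ℤ) : stmt14T Γ ∩ Γ = Γ :=
  Finset.inter_eq_right.mpr Finset.subset_union_left

lemma stmt14_inter_right (Γ : Finset ℤ) : stmt14T Γ ∩ Γ.image (· - 1) = Γ.image (· - 1) :=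
  Finset.inter_eq_right.mpr Finset.subset_union_right

lemma stmt14_rewrite {Ω' : Type*} (ε : ℤ → Ω' → ℝ) (Γ : Finset ℤ) (ω : Ω') :
    ∑ i ∈ Γ, (ε i ω - ε (i - 1) ω) = ∑ j ∈ stmt14T Γ, stmt14c Γ j * ε j ω := by
  have h1 : ∑ i ∈ Γ, ε i ω = ∑ j ∈ stmt14T Γ, (if j ∈ Γ then ε j ω else 0) := by
    rw [Finset.sum_ite_mem, stmt14_inter_left]
  have h2 : ∑ i ∈ Γ, ε (i - 1) ω
      = ∑ j ∈ stmt14T Γ, (if j + 1 ∈ Γ then ε j ω else 0) := by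
    calc ∑ i ∈ Γ, ε (i - 1) ω = ∑ j ∈ Γ.image (· - 1), ε j ω :=
          (Finset.sum_image (g := fun x : ℤ => x - 1) (f := fun j => ε j ω)
          (fun a _ b _ h => by simpa using h)).symm
      _ = ∑ j ∈ stmt14T Γ, (if j ∈ Γ.image (· - 1) then ε j ω else 0) := by
          rw [Finset.sum_ite_mem, stmt14_inter_right]
      _ = ∑ j ∈ stmt14T Γ, (if j + 1 ∈ Γ then ε j ω else 0) := by
          simp only [stmt14_mem_img]
  rw [Finset.sum_sub_distrib, h1, h2, ← Finset.sum_sub_distrib]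
  refine Finset.sum_congr rfl fun j _ => ?_
  unfold stmt14c
  split_ifs <;> ring

lemma stmt14_sumsq (Γ : Finset ℤ) :
    ∑ j ∈ stmt14T Γ, (stmt14c Γ j) ^ 2
      = 2 * (Γ.card : ℝ) - 2 * ((Γ.filter (fun i => i + 1 ∈ Γ)).card : ℝ) := by
  classical
  have hpt : ∀ j ∈ stmt14T Γ, (stmt14c Γ j) ^ 2
      = ((if j ∈ Γ then (1:ℝ) else 0) + (if j + 1 ∈ Γ then (1:ℝ) else 0))
        - 2 * (if j ∈ Γ ∧ j + 1 ∈ Γ then (1:ℝ) else 0) := by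
    intro j _
    unfold stmt14c
    by_cases h1 : j ∈ Γ <;> by_cases h2 : j + 1 ∈ Γ <;>
      simp [h1, h2] <;> norm_num
  rw [Finset.sum_congr rfl hpt, Finset.sum_sub_distrib, Finset.sum_add_distrib,
    ← Finset.mul_sum]
  have e1 : ∑ j ∈ stmt14T Γ, (if j ∈ Γ then (1:ℝ) else 0) = (Γ.card : ℝ) := by
    rw [Finset.sum_boole, Finset.filter_mem_eq_inter, stmt14_inter_left]
  have e2 : ∑ j ∈ stmt14T Γ, (if j + 1 ∈ Γ then (1:ℝ) else 0) = (Γ.card : ℝ) := by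
    rw [Finset.sum_boole]
    have hfil : (stmt14T Γ).filter (fun j => j + 1 ∈ Γ) = Γ.image (· - 1) := by
      ext j
      simp only [Finset.mem_filter, stmt14_mem_img]
      exact ⟨fun h => h.2, fun h => ⟨Finset.mem_union_right _ ((stmt14_mem_img Γ j).mpr h), h⟩⟩
    rw [hfil, Finset.card_image_of_injective _ (fun a b h => by omega)]
  have e3 : ∑ j ∈ stmt14T Γ, (if j ∈ Γ ∧ j + 1 ∈ Γ then (1:ℝ) else 0)
      = ((Γ.filter (fun i => i + 1 ∈ Γ)).card : ℝ) := by
    rw [Finset.sum_boole]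
    congr 2
    ext j
    simp only [Finset.mem_filter]
    exact ⟨fun h => ⟨h.2.1, h.2.2⟩, fun h => ⟨Finset.mem_union_left _ h.1, h.1, h.2⟩⟩
  rw [e1, e2, e3]
  ring

lemma stmt14_var {Ω : Type*} [MeasurableSpace Ω] (μ : Measure Ω) [IsProbabilityMeasure μ]
    (ε : ℤ → Ω → ℝ)
    (hmeas : ∀ j, Measurable (ε j))
    (hindep : iIndepFun ε μ)
    (hident : ∀ j k, IdentDistrib (ε j) (ε k) μ μ)
    (hcent : ∫ ω, ε 0 ω ∂μ = 0)
    (hL2 : MemLp (ε 0) 2 μ) (Γ : Finset ℤ) :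
    variance (fun ω => ∑ i ∈ Γ, (ε i ω - ε (i - 1) ω)) μ
      = (∑ j ∈ stmt14T Γ, (stmt14c Γ j) ^ 2) * ∫ ω, (ε 0 ω) ^ 2 ∂μ := by
  have hL2' : ∀ j, MemLp (ε j) 2 μ := fun j => (hident 0 j).memLp_snd hL2
  have hfun : (fun ω => ∑ i ∈ Γ, (ε i ω - ε (i - 1) ω))
      = ∑ j ∈ stmt14T Γ, (fun ω => stmt14c Γ j * ε j ω) := by
    funext ω
    rw [stmt14_rewrite]
    simp [Finset.sum_apply]
  rw [hfun, IndepFun.variance_sum]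
  · have hv0 : variance (ε 0) μ = ∫ ω, (ε 0 ω) ^ 2 ∂μ := by
      rw [variance_of_integral_eq_zero hL2.aemeasurable hcent]
    rw [Finset.sum_mul]
    refine Finset.sum_congr rfl fun j _ => ?_
    rw [variance_const_mul, (hident j 0).variance_eq, hv0]
  · exact fun j _ => (hL2' j).const_mul _
  · intro i hi j hj hij
    exact (hindep.indepFun hij).comp (measurable_id.const_mul _) (measurable_id.const_mul _)

noncomputable def stmt14G (p q : ℕ) : Finset ℤ :=
  (Finset.range p).image (fun i : ℕ => -2 * (i : ℤ) - 2) ∪ Finset.Icc 1 (q : ℤ)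

lemma stmt14_mem_G {p q : ℕ} {j : ℤ} :
    j ∈ stmt14G p q ↔ (j % 2 = 0 ∧ -2 * (p : ℤ) ≤ j ∧ j ≤ -2) ∨ (1 ≤ j ∧ j ≤ (q : ℤ)) := by
  simp only [stmt14G, Finset.mem_union, Finset.mem_image, Finset.mem_range, Finset.mem_Icc]
  constructor
  · rintro (⟨i, hi, rfl⟩ | h)
    · left; constructor; · omega
      constructor <;> omega
    · right; exact h
  · rintro (⟨h1, h2, h3⟩ | h)
    · exact .inl ⟨(-(j + 2) / 2).toNat, by omega, by omega⟩
    · exact .inr h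

lemma stmt14_card_G (p q : ℕ) : (stmt14G p q).card = p + q := by
  classical
  have hinj : Function.Injective (fun i : ℕ => -2 * (i : ℤ) - 2) := by
    intro a b h
    dsimp only at h
    omega
  have hd : Disjoint ((Finset.range p).image (fun i : ℕ => -2 * (i : ℤ) - 2))
      (Finset.Icc 1 (q : ℤ)) := by
    rw [Finset.disjoint_left]
    rintro a ha hb
    simp only [Finset.mem_image, Finset.mem_range] at ha
    rw [Finset.mem_Icc] at hb
    obtain ⟨i, _, rfl⟩ := ha
    omega
  rw [stmt14G, Finset.card_union_of_disjoint hd, Finset.card_image_of_injective _ hinj,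
    Finset.card_range, Int.card_Icc]
  omega

lemma stmt14_filter_G (p q : ℕ) (hq : 1 ≤ q) :
    ((stmt14G p q).filter (fun i => i + 1 ∈ stmt14G p q)).card = q - 1 := by
  classical
  have h : (stmt14G p q).filter (fun i => i + 1 ∈ stmt14G p q)
      = Finset.Icc (1 : ℤ) ((q : ℤ) - 1) := by
    ext j
    simp only [Finset.mem_filter, stmt14_mem_G, Finset.mem_Icc]
    omega
  rw [h, Int.card_Icc]
  omega

/-- Example 2: for the one-dependent field `X_i = ε_i − ε_{i−1}` built from
non-degenerate i.i.d. centered square-integrable variables, there is an increasing sequence of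
finite sets `Γ_n ⊆ ℤ` with `|Γ_n| → ∞` such that `liminf σ_n²/|Γ_n| > 0` but `σ_n²/|Γ_n|`
does not converge, where `σ_n² = Var(∑_{i ∈ Γ_n} X_i)`. -/
theorem stmt14 {Ω : Type*} [MeasurableSpace Ω] (μ : Measure Ω) [IsProbabilityMeasure μ]
    (ε : ℤ → Ω → ℝ)
    (hmeas : ∀ j, Measurable (ε j))
    (hindep : iIndepFun ε μ)
    (hident : ∀ j k, IdentDistrib (ε j) (ε k) μ μ)
    (hcent : ∫ ω, ε 0 ω ∂μ = 0)
    (hL2 : MemLp (ε 0) 2 μ)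
    (hnondeg : 0 < ∫ ω, (ε 0 ω) ^ 2 ∂μ) :
    ∃ Γ : ℕ → Finset ℤ,
      (∀ n, Γ n ⊆ Γ (n + 1)) ∧
      Tendsto (fun n => ((Γ n).card : ℝ)) atTop atTop ∧
      0 < Filter.liminf (fun n =>
          variance (fun ω => ∑ i ∈ Γ n, (ε i ω - ε (i - 1) ω)) μ / ((Γ n).card : ℝ)) atTop ∧
      ¬ ∃ L : ℝ, Tendsto (fun n =>
          variance (fun ω => ∑ i ∈ Γ n, (ε i ω - ε (i - 1) ω)) μ / ((Γ n).card : ℝ))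
        atTop (𝓝 L) := by
  classical
  set σ2 : ℝ := ∫ ω, (ε 0 ω) ^ 2 ∂μ with hσ2
  have hσ : 0 < σ2 := hnondeg
  set p : ℕ → ℕ := fun n => 3 ^ (n / 2 + 2) - 1 with hp
  set q : ℕ → ℕ := fun n => 3 ^ ((n + 1) / 2 + 1) + 1 with hq
  set u : ℕ → ℝ := fun n => if Even n then 3 / 2 * σ2 else σ2 with hu
  have hq1 : ∀ n, 1 ≤ q n := fun n => Nat.le_add_left 1 _
  have hvar : ∀ n, variance
      (fun ω => ∑ i ∈ stmt14G (p n) (q n), (ε i ω - ε (i - 1) ω)) μ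
      = (2 * (p n : ℝ) + 2) * σ2 := by
    intro n
    rw [stmt14_var μ ε hmeas hindep hident hcent hL2, stmt14_sumsq, stmt14_card_G,
      stmt14_filter_G _ _ (hq1 n)]
    have hc : ((q n - 1 : ℕ) : ℝ) = (q n : ℝ) - 1 := by
      rw [Nat.cast_sub (hq1 n)]; norm_num
    rw [Nat.cast_add, hc, ← hσ2]
    ring
  have hcard : ∀ n, ((stmt14G (p n) (q n)).card : ℝ) = (p n : ℝ) + (q n : ℝ) := by
    intro n; rw [stmt14_card_G]; push_cast; ring
  have hpow : ∀ m : ℕ, ((3 ^ (m + 2) - 1 : ℕ) : ℝ) = 3 ^ (m + 2) - 1 := by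
    intro m
    rw [Nat.cast_sub (Nat.one_le_pow _ _ (by norm_num))]
    push_cast; ring
  have hratio : ∀ n, variance
      (fun ω => ∑ i ∈ stmt14G (p n) (q n), (ε i ω - ε (i - 1) ω)) μ
        / ((stmt14G (p n) (q n)).card : ℝ) = u n := by
    intro n
    rw [hvar, hcard]
    rcases Nat.even_or_odd n with ⟨k, rfl⟩ | ⟨k, rfl⟩
    · have hval : u (k + k) = 3 / 2 * σ2 := if_pos ⟨k, rfl⟩
      have hpk : p (k + k) = 3 ^ (k + 2) - 1 := by
        simp only [hp]; rw [show (k + k) / 2 = k by omega]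
      have hqk : q (k + k) = 3 ^ (k + 1) + 1 := by
        simp only [hq]; rw [show (k + k + 1) / 2 = k by omega]
      have h3 : (3 : ℝ) ^ (k + 1) ≠ 0 := by positivity
      rw [hval, hpk, hqk, hpow]
      push_cast
      rw [show k + 2 = (k + 1) + 1 by ring, pow_succ]
      field_simp
      ring_nf
      rw [← mul_pow, inv_mul_cancel₀ (by norm_num : (3:ℝ) ≠ 0), one_pow, one_mul]
    · have hval : u (2 * k + 1) = σ2 := if_neg (by rintro ⟨m, hm⟩; omega)
      have hpk : p (2 * k + 1) = 3 ^ (k + 2) - 1 := by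
        simp only [hp]; rw [show (2 * k + 1) / 2 = k by omega]
      have hqk : q (2 * k + 1) = 3 ^ (k + 2) + 1 := by
        simp only [hq]; rw [show (2 * k + 1 + 1) / 2 = k + 1 by omega]
      have h3 : (3 : ℝ) ^ (k + 2) ≠ 0 := by positivity
      rw [hval, hpk, hqk, hpow]
      push_cast
      field_simp
      ring
  refine ⟨fun n => stmt14G (p n) (q n), ?_, ?_, ?_, ?_⟩
  · intro n
    apply Finset.union_subset_union
    · apply Finset.image_subset_image
      apply Finset.range_subset_range.mpr
      have h1 : 3 ^ (n / 2 + 2) ≤ 3 ^ ((n + 1) / 2 + 2) :=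
        Nat.pow_le_pow_right (by norm_num) (by omega)
      simp only [hp]; omega
    · apply Finset.Icc_subset_Icc le_rfl
      have h1 : 3 ^ ((n + 1) / 2 + 1) ≤ 3 ^ ((n + 1 + 1) / 2 + 1) :=
        Nat.pow_le_pow_right (by norm_num) (by omega)
      simp only [hq]
      exact_mod_cast Nat.succ_le_succ h1
  · have hge : ∀ n : ℕ, (n : ℝ) ≤ ((stmt14G (p n) (q n)).card : ℝ) := by
      intro n
      have h1 : n / 2 < 3 ^ (n / 2) := Nat.lt_pow_self (by norm_num)
      have h2 : 3 ^ (n / 2 + 2) = 9 * 3 ^ (n / 2) := by ring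
      have : n ≤ (stmt14G (p n) (q n)).card := by
        rw [stmt14_card_G]
        simp only [hp, hq]
        have h3 : 1 ≤ 3 ^ ((n + 1) / 2 + 1) := Nat.one_le_pow _ _ (by norm_num)
        omega
      exact_mod_cast this
    exact tendsto_atTop_mono hge tendsto_natCast_atTop_atTop
  · have hfun : (fun n => variance
        (fun ω => ∑ i ∈ stmt14G (p n) (q n), (ε i ω - ε (i - 1) ω)) μ
          / ((stmt14G (p n) (q n)).card : ℝ)) = u := funext hratio
    rw [hfun]
    have hbd : IsBoundedUnder (· ≤ ·) atTop u := by
      refine isBoundedUnder_of ⟨3 / 2 * σ2, fun n => ?_⟩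
      show (if Even n then 3 / 2 * σ2 else σ2) ≤ 3 / 2 * σ2
      split_ifs
      · exact le_rfl
      · linarith
    refine lt_of_lt_of_le hσ (le_liminf_of_le hbd.isCoboundedUnder_ge
      (Filter.Eventually.of_forall fun n => ?_))
    show σ2 ≤ (if Even n then 3 / 2 * σ2 else σ2)
    split_ifs
    · linarith
    · exact le_rfl
  · rintro ⟨L, hL⟩
    have hfun : (fun n => variance
        (fun ω => ∑ i ∈ stmt14G (p n) (q n), (ε i ω - ε (i - 1) ω)) μ
          / ((stmt14G (p n) (q n)).card : ℝ)) = u := funext hratio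
    rw [hfun] at hL
    have ht1 : Tendsto (fun k : ℕ => 2 * k) atTop atTop :=
      tendsto_atTop_mono (fun k => by show k ≤ 2 * k; omega) tendsto_id
    have ht2 : Tendsto (fun k : ℕ => 2 * k + 1) atTop atTop :=
      tendsto_atTop_mono (fun k => by show k ≤ 2 * k + 1; omega) tendsto_id
    have h1 : Tendsto (fun k : ℕ => u (2 * k)) atTop (𝓝 L) := hL.comp ht1
    have h2 : Tendsto (fun k : ℕ => u (2 * k + 1)) atTop (𝓝 L) := hL.comp ht2
    have e1 : (fun k : ℕ => u (2 * k)) = fun _ => 3 / 2 * σ2 :=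
      funext fun k => if_pos ⟨k, by ring⟩
    have e2 : (fun k : ℕ => u (2 * k + 1)) = fun _ => σ2 :=
      funext fun k => if_neg (by rintro ⟨m, hm⟩; omega)
    rw [e1] at h1
    rw [e2] at h2
    have := tendsto_nhds_unique h1 tendsto_const_nhds
    have := tendsto_nhds_unique h2 tendsto_const_nhds
    linarith
end
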